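/- Failure localization for a single non-bridge outage (Corollary 2): Let ℓ̂ = (î, ĵ) be a non-bridge edge of the connected graph G and let l = (i, j) ≠ ℓ̂ be any other edge such that no simple cycle of G contains both l and ℓ̂ (i.e., l and ℓ̂ lie in different blocks of G). Then K_{lℓ̂} = 0 and D_{lℓ̂} = 0. Moreover, for any l ≠ ℓ̂, D_{lℓ̂} = 0 if and only if K_{lℓ̂} = 0. -/

import Mathlib

open Matrix Finset

variable {n m : ℕ}

/-- Nodes `a` and `b` are joined by some edge in the edge set `S`. -/
def edgeAdj (src tgt : Fin m → Fin (n + 1)) (S : Finset (Fin m)) (a b : Fin (n + 1)) : Prop :=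
  ∃ e ∈ S, (src e = a ∧ tgt e = b) ∨ (src e = b ∧ tgt e = a)

/-- The spanning subgraph with edge set `S` is connected. -/
def ConnectedOn (src tgt : Fin m → Fin (n + 1)) (S : Finset (Fin m)) : Prop :=
  ∀ a b : Fin (n + 1), Relation.ReflTransGen (edgeAdj src tgt S) a b

/-- `F` is the edge set of a spanning tree of the graph on `n + 1` nodes
(a connected spanning subgraph with exactly `n` edges). -/
def IsSpanningTree (src tgt : Fin m → Fin (n + 1)) (F : Finset (Fin m)) : Prop :=
  F.card = n ∧ ConnectedOn src tgt F

/-- Connectivity within the vertex set `V`, using only edges of `S` traversed inside `V`. -/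
def ConnWithin (src tgt : Fin m → Fin (n + 1)) (S : Finset (Fin m))
    (V : Finset (Fin (n + 1))) : Prop :=
  ∀ a ∈ V, ∀ b ∈ V,
    Relation.ReflTransGen (fun x y => x ∈ V ∧ y ∈ V ∧ edgeAdj src tgt S x y) a b

/-- `F` is a spanning forest of exactly two vertex-disjoint trees, one containing all
nodes in `N1` and the other containing all nodes in `N2`. -/
def IsSpanningForest2 (src tgt : Fin m → Fin (n + 1)) (F : Finset (Fin m))
    (N1 N2 : Finset (Fin (n + 1))) : Prop :=
  ∃ V1 V2 : Finset (Fin (n + 1)),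
    Disjoint V1 V2 ∧ V1 ∪ V2 = Finset.univ ∧ V1.Nonempty ∧ V2.Nonempty ∧
      N1 ⊆ V1 ∧ N2 ⊆ V2 ∧ F.card + 1 = n ∧
      (∀ e ∈ F, (src e ∈ V1 ∧ tgt e ∈ V1) ∨ (src e ∈ V2 ∧ tgt e ∈ V2)) ∧
      ConnWithin src tgt F V1 ∧ ConnWithin src tgt F V2

/-- The (signed) incidence matrix `C`. -/
def incMat (src tgt : Fin m → Fin (n + 1)) : Matrix (Fin (n + 1)) (Fin m) ℝ :=
  Matrix.of fun i e => if src e = i then 1 else if tgt e = i then -1 else 0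

/-- The weighted Laplacian `L = C ⬝ diag B ⬝ Cᵀ`. -/
noncomputable def lap (src tgt : Fin m → Fin (n + 1)) (B : Fin m → ℝ) :
    Matrix (Fin (n + 1)) (Fin (n + 1)) ℝ :=
  incMat src tgt * Matrix.diagonal B * (incMat src tgt)ᵀ

/-- The reduced Laplacian: delete the row and column of the reference node `Fin.last n`. -/
noncomputable def rlap (src tgt : Fin m → Fin (n + 1)) (B : Fin m → ℝ) :
    Matrix (Fin n) (Fin n) ℝ :=
  (lap src tgt B).submatrix Fin.castSucc Fin.castSucc

/-- The inverse of the reduced Laplacian, padded with a zero row and column at the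
reference node. -/
noncomputable def Amat (src tgt : Fin m → Fin (n + 1)) (B : Fin m → ℝ) :
    Matrix (Fin (n + 1)) (Fin (n + 1)) ℝ :=
  Matrix.of fun i j =>
    if hi : i = Fin.last n then 0
    else if hj : j = Fin.last n then 0
    else (rlap src tgt B)⁻¹ (i.castPred hi) (j.castPred hj)

open Classical in
/-- `Σ_{F ∈ T_E} β(F)`: total weight of all spanning trees. -/
noncomputable def treeSum (src tgt : Fin m → Fin (n + 1)) (B : Fin m → ℝ) : ℝ :=
  ∑ F ∈ Finset.univ.filter (fun F => IsSpanningTree src tgt F), ∏ e ∈ F, B e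

open Classical in
/-- `Σ_{F ∈ T_{−l}} β(F)`: total weight of all spanning trees avoiding the edge `l`. -/
noncomputable def treeSumAvoiding (src tgt : Fin m → Fin (n + 1)) (B : Fin m → ℝ)
    (l : Fin m) : ℝ :=
  ∑ F ∈ Finset.univ.filter (fun F => IsSpanningTree src tgt F ∧ l ∉ F), ∏ e ∈ F, B e

open Classical in
/-- `Σ_{F ∈ T(N1, N2)} β(F)`: total weight of two-tree spanning forests separating
`N1` from `N2`. -/
noncomputable def forestSum (src tgt : Fin m → Fin (n + 1)) (B : Fin m → ℝ)
    (N1 N2 : Finset (Fin (n + 1))) : ℝ :=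
  ∑ F ∈ Finset.univ.filter (fun F => IsSpanningForest2 src tgt F N1 N2), ∏ e ∈ F, B e

/-- The power transfer distribution factor `D_{l, î ĵ}`. -/
noncomputable def ptdf (src tgt : Fin m → Fin (n + 1)) (B : Fin m → ℝ) (l : Fin m)
    (ihat jhat : Fin (n + 1)) : ℝ :=
  B l * (Amat src tgt B (src l) ihat + Amat src tgt B (tgt l) jhat
    - Amat src tgt B (src l) jhat - Amat src tgt B (tgt l) ihat)

/-- An edge is a bridge if its removal disconnects the graph. -/
def IsBridge (src tgt : Fin m → Fin (n + 1)) (l : Fin m) : Prop :=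
  ¬ ConnectedOn src tgt (Finset.univ.erase l)

/-- There is a simple cycle (distinct edges, distinct vertices) containing both edges
`l` and `lhat`. -/
def ExistsSimpleCycleThrough (src tgt : Fin m → Fin (n + 1)) (l lhat : Fin m) : Prop :=
  ∃ (k : ℕ) (es : Fin (k + 2) → Fin m) (vs : Fin (k + 2) → Fin (n + 1)),
    Function.Injective es ∧ Function.Injective vs ∧
      (∀ t, (src (es t) = vs t ∧ tgt (es t) = vs (t + 1)) ∨
        (src (es t) = vs (t + 1) ∧ tgt (es t) = vs t)) ∧
      (∃ t, es t = l) ∧ (∃ t, es t = lhat)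

/-- The incidence submatrix `C_{−F}` on the surviving edges. -/
def Cminus (src tgt : Fin m → Fin (n + 1)) (F : Finset (Fin m)) :
    Matrix (Fin (n + 1)) {e : Fin m // e ∉ F} ℝ :=
  (incMat src tgt).submatrix id (fun e => e.val)

/-- The incidence submatrix `C_F` on the removed edges. -/
def Cof (src tgt : Fin m → Fin (n + 1)) (F : Finset (Fin m)) :
    Matrix (Fin (n + 1)) {e : Fin m // e ∈ F} ℝ :=
  (incMat src tgt).submatrix id (fun e => e.val)

/-- The diagonal susceptance submatrix `B_{−F}` on the surviving edges. -/
noncomputable def Bminus (B : Fin m → ℝ) (F : Finset (Fin m)) :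
    Matrix {e : Fin m // e ∉ F} {e : Fin m // e ∉ F} ℝ :=
  Matrix.diagonal fun e => B e.val

/-- The diagonal susceptance submatrix `B_F` on the removed edges. -/
noncomputable def Bof (B : Fin m → ℝ) (F : Finset (Fin m)) :
    Matrix {e : Fin m // e ∈ F} {e : Fin m // e ∈ F} ℝ :=
  Matrix.diagonal fun e => B e.val

/-- The post-contingency Laplacian `L_{−F} = C_{−F} ⬝ B_{−F} ⬝ C_{−F}ᵀ`. -/
noncomputable def lapMinus (src tgt : Fin m → Fin (n + 1)) (B : Fin m → ℝ)
    (F : Finset (Fin m)) : Matrix (Fin (n + 1)) (Fin (n + 1)) ℝ :=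
  Cminus src tgt F * Bminus B F * (Cminus src tgt F)ᵀ

/-- The padded inverse `A_{−F}` of the post-contingency reduced Laplacian. -/
noncomputable def AmatMinus (src tgt : Fin m → Fin (n + 1)) (B : Fin m → ℝ)
    (F : Finset (Fin m)) : Matrix (Fin (n + 1)) (Fin (n + 1)) ℝ :=
  Matrix.of fun i j =>
    if hi : i = Fin.last n then 0
    else if hj : j = Fin.last n then 0
    else ((lapMinus src tgt B F).submatrix Fin.castSucc Fin.castSucc)⁻¹
      (i.castPred hi) (j.castPred hj)

/-- The pre-contingency branch flow vector `f = diag(B) ⬝ Cᵀ ⬝ A ⬝ p`. -/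
noncomputable def flowPre (src tgt : Fin m → Fin (n + 1)) (B : Fin m → ℝ)
    (p : Fin (n + 1) → ℝ) : Fin m → ℝ :=
  (Matrix.diagonal B * (incMat src tgt)ᵀ * Amat src tgt B) *ᵥ p

/-- The post-contingency branch flow vector `f̃_{−F} = B_{−F} ⬝ C_{−F}ᵀ ⬝ A_{−F} ⬝ p`
on the surviving edges. -/
noncomputable def flowPost (src tgt : Fin m → Fin (n + 1)) (B : Fin m → ℝ)
    (F : Finset (Fin m)) (p : Fin (n + 1) → ℝ) : {e : Fin m // e ∉ F} → ℝ :=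
  (Bminus B F * (Cminus src tgt F)ᵀ * AmatMinus src tgt B F) *ᵥ p

/-- The generalized line outage distribution factor matrix
`K^F = B_{−F} ⬝ C_{−F}ᵀ ⬝ A_{−F} ⬝ C_F`. -/
noncomputable def glodf (src tgt : Fin m → Fin (n + 1)) (B : Fin m → ℝ)
    (F : Finset (Fin m)) : Matrix {e : Fin m // e ∉ F} {e : Fin m // e ∈ F} ℝ :=
  Bminus B F * (Cminus src tgt F)ᵀ * AmatMinus src tgt B F * Cof src tgt F

/-- The PTDF submatrix `D_{FF} = B_F ⬝ C_Fᵀ ⬝ A ⬝ C_F`. -/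
noncomputable def Dff (src tgt : Fin m → Fin (n + 1)) (B : Fin m → ℝ)
    (F : Finset (Fin m)) : Matrix {e : Fin m // e ∈ F} {e : Fin m // e ∈ F} ℝ :=
  Bof B F * (Cof src tgt F)ᵀ * Amat src tgt B * Cof src tgt F

/-- The PTDF submatrix `D_{−FF} = B_{−F} ⬝ C_{−F}ᵀ ⬝ A ⬝ C_F`. -/
noncomputable def DmFF (src tgt : Fin m → Fin (n + 1)) (B : Fin m → ℝ)
    (F : Finset (Fin m)) : Matrix {e : Fin m // e ∉ F} {e : Fin m // e ∈ F} ℝ :=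
  Bminus B F * (Cminus src tgt F)ᵀ * Amat src tgt B * Cof src tgt F

namespace FLAux

open Matrix Finset

variable {n m : ℕ}

/-! ### Basic incidence-matrix sums -/

lemma inc_sum (src tgt : Fin m → Fin (n + 1)) (hsimple : ∀ e, src e ≠ tgt e)
    (e : Fin m) (x : Fin (n + 1) → ℝ) :
    ∑ v, incMat src tgt v e * x v = x (src e) - x (tgt e) := by
  have h : ∀ v, incMat src tgt v e * x v
      = (if src e = v then x v else 0) + (if tgt e = v then -x v else 0) := by
    intro v
    by_cases h1 : src e = v
    · have h2 : tgt e ≠ v := fun h2 => hsimple e (h1.trans h2.symm)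
      simp [incMat, h1, h2]
    · by_cases h2 : tgt e = v
      · simp [incMat, h1, h2]
      · simp [incMat, h1, h2]
  rw [Finset.sum_congr rfl (fun v _ => h v), Finset.sum_add_distrib,
    Finset.sum_ite_eq, Finset.sum_ite_eq]
  simp
  ring

lemma lap_mulVec (src tgt : Fin m → Fin (n + 1)) (B : Fin m → ℝ)
    (hsimple : ∀ e, src e ≠ tgt e) (x : Fin (n + 1) → ℝ) (v : Fin (n + 1)) :
    (lap src tgt B *ᵥ x) v = ∑ e, incMat src tgt v e * (B e * (x (src e) - x (tgt e))) := by
  have h1 : lap src tgt B *ᵥ x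
      = incMat src tgt *ᵥ (Matrix.diagonal B *ᵥ ((incMat src tgt)ᵀ *ᵥ x)) := by
    simp only [lap, Matrix.mul_assoc, Matrix.mulVec_mulVec]
  rw [h1]
  have h2 : ∀ w : Fin m → ℝ, (incMat src tgt *ᵥ w) v = ∑ e, incMat src tgt v e * w e :=
    fun w => by simp only [Matrix.mulVec, dotProduct]
  rw [h2]
  apply Finset.sum_congr rfl
  intro e _
  congr 1
  rw [Matrix.mulVec_diagonal]
  congr 1
  have h3 : ((incMat src tgt)ᵀ *ᵥ x) e = ∑ v, incMat src tgt v e * x v := by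
    simp only [Matrix.mulVec, dotProduct, Matrix.transpose_apply]
  rw [h3, inc_sum src tgt hsimple e x]

lemma quad (src tgt : Fin m → Fin (n + 1)) (B : Fin m → ℝ)
    (hsimple : ∀ e, src e ≠ tgt e) (x : Fin (n + 1) → ℝ) :
    ∑ v, x v * ((lap src tgt B *ᵥ x) v) = ∑ e, B e * (x (src e) - x (tgt e)) ^ 2 := by
  rw [Finset.sum_congr rfl (fun v _ => by rw [lap_mulVec src tgt B hsimple x v])]
  simp only [Finset.mul_sum]
  rw [Finset.sum_comm]
  apply Finset.sum_congr rfl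
  intro e _
  have h : ∀ v, x v * (incMat src tgt v e * (B e * (x (src e) - x (tgt e))))
      = incMat src tgt v e * x v * (B e * (x (src e) - x (tgt e))) := fun v => by ring
  rw [Finset.sum_congr rfl (fun v _ => h v), ← Finset.sum_mul, inc_sum src tgt hsimple e x]
  ring

lemma const_of_conn (src tgt : Fin m → Fin (n + 1)) (S : Finset (Fin m))
    (hconn : ConnectedOn src tgt S) (x : Fin (n + 1) → ℝ)
    (hx : ∀ e ∈ S, x (src e) = x (tgt e)) : ∀ a b, x a = x b := by
  intro a b
  induction hconn a b with
  | refl => rfl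
  | tail h1 h2 ih =>
      obtain ⟨e, heS, h⟩ := h2
      rcases h with ⟨hs, ht⟩ | ⟨hs, ht⟩
      · rw [ih, ← hs, hx e heS, ht]
      · rw [ih, ← ht, ← hx e heS, hs]

/-! ### Padding -/

def pad (x : Fin n → ℝ) : Fin (n + 1) → ℝ :=
  fun v => if h : v = Fin.last n then 0 else x (v.castPred h)

lemma pad_castSucc (x : Fin n → ℝ) (i : Fin n) : pad x i.castSucc = x i := by
  rw [pad, dif_neg (Fin.castSucc_lt_last i).ne, Fin.castPred_castSucc]

lemma pad_last (x : Fin n → ℝ) : pad x (Fin.last n) = 0 := by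
  rw [pad, dif_pos rfl]

lemma lap_pad (src tgt : Fin m → Fin (n + 1)) (B : Fin m → ℝ) (x : Fin n → ℝ) (i : Fin n) :
    (lap src tgt B *ᵥ pad x) i.castSucc = (rlap src tgt B *ᵥ x) i := by
  simp only [Matrix.mulVec, dotProduct]
  rw [Fin.sum_univ_castSucc, pad_last, mul_zero, add_zero]
  apply Finset.sum_congr rfl
  intro j _
  rw [pad_castSucc]
  rfl

lemma rlap_det_isUnit (src tgt : Fin m → Fin (n + 1)) (B : Fin m → ℝ)
    (hB : ∀ e, 0 < B e) (hsimple : ∀ e, src e ≠ tgt e)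
    (hconn : ConnectedOn src tgt Finset.univ) :
    IsUnit (rlap src tgt B).det := by
  rw [isUnit_iff_ne_zero]
  intro hdet
  obtain ⟨y, hy0, hy⟩ := Matrix.exists_mulVec_eq_zero_iff.2 hdet
  have hq : ∑ e, B e * (pad y (src e) - pad y (tgt e)) ^ 2 = 0 := by
    rw [← quad src tgt B hsimple (pad y), Fin.sum_univ_castSucc, pad_last, zero_mul, add_zero]
    apply Finset.sum_eq_zero
    intro i _
    rw [lap_pad, hy]
    simp
  have hz : ∀ e, pad y (src e) = pad y (tgt e) := by
    intro e
    have hnn : ∀ e ∈ Finset.univ, (0:ℝ) ≤ B e * (pad y (src e) - pad y (tgt e)) ^ 2 :=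
      fun e _ => mul_nonneg (hB e).le (sq_nonneg _)
    have h0 := (Finset.sum_eq_zero_iff_of_nonneg hnn).1 hq e (Finset.mem_univ e)
    have hd : (pad y (src e) - pad y (tgt e)) ^ 2 = 0 := by
      rcases mul_eq_zero.1 h0 with h | h
      · exact absurd h (hB e).ne'
      · exact h
    have := (pow_eq_zero_iff (two_ne_zero)).1 hd
    linarith
  have hconst := const_of_conn src tgt Finset.univ hconn (pad y) (fun e _ => hz e)
  apply hy0
  funext i
  have := hconst (Fin.castSucc i) (Fin.last n)
  rw [pad_castSucc, pad_last] at this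
  exact this

/-! ### The potential and conservation -/

lemma indicator_sum (M : Fin n → ℝ) (a : Fin (n + 1)) :
    ∑ j, M j * (if j.castSucc = a then (1:ℝ) else 0)
      = if ha : a = Fin.last n then 0 else M (a.castPred ha) := by
  by_cases ha : a = Fin.last n
  · rw [dif_pos ha]
    subst ha
    apply Finset.sum_eq_zero
    intro j _
    rw [if_neg (Fin.castSucc_lt_last j).ne, mul_zero]
  · rw [dif_neg ha]
    have hcond : ∀ j : Fin n, (j.castSucc = a) ↔ (j = a.castPred ha) := by
      intro j
      constructor
      · intro h
        subst h
        rw [Fin.castPred_castSucc]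
      · rintro rfl
        exact Fin.castSucc_castPred a ha
    simp only [hcond, mul_ite, mul_one, mul_zero, Finset.sum_ite_eq', Finset.mem_univ, if_true]

lemma theta_pad (src tgt : Fin m → Fin (n + 1)) (B : Fin m → ℝ) (a b : Fin (n + 1)) :
    (fun v => Amat src tgt B v a - Amat src tgt B v b)
      = pad ((rlap src tgt B)⁻¹ *ᵥ
          (fun j => (if (j.castSucc : Fin (n+1)) = a then (1:ℝ) else 0)
            - (if (j.castSucc : Fin (n+1)) = b then 1 else 0))) := by
  funext v
  induction v using Fin.lastCases with
  | last => simp [Amat, pad_last]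
  | cast i =>
    rw [pad_castSucc]
    have hmv : ((rlap src tgt B)⁻¹ *ᵥ
          (fun j => (if (j.castSucc : Fin (n+1)) = a then (1:ℝ) else 0)
            - (if (j.castSucc : Fin (n+1)) = b then 1 else 0))) i
        = ∑ j, (rlap src tgt B)⁻¹ i j *
            ((if (j.castSucc : Fin (n+1)) = a then (1:ℝ) else 0)
              - (if (j.castSucc : Fin (n+1)) = b then 1 else 0)) := by
      simp only [Matrix.mulVec, dotProduct]
    rw [hmv, Finset.sum_congr rfl (fun j _ => mul_sub ((rlap src tgt B)⁻¹ i j) _ _),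
      Finset.sum_sub_distrib, indicator_sum, indicator_sum]
    have hA : ∀ c : Fin (n + 1), Amat src tgt B i.castSucc c
        = if hc : c = Fin.last n then 0 else (rlap src tgt B)⁻¹ i (c.castPred hc) := by
      intro c
      by_cases hc : c = Fin.last n
      · simp [Amat, hc]
      · simp [Amat, (Fin.castSucc_lt_last i).ne, hc, Fin.castPred_castSucc]
    rw [hA, hA]

lemma conservation (src tgt : Fin m → Fin (n + 1)) (B : Fin m → ℝ)
    (hB : ∀ e, 0 < B e) (hsimple : ∀ e, src e ≠ tgt e)
    (hconn : ConnectedOn src tgt Finset.univ) (a b : Fin (n + 1)) (v : Fin (n + 1)) :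
    ∑ e, incMat src tgt v e * (B e * ((Amat src tgt B (src e) a - Amat src tgt B (src e) b)
        - (Amat src tgt B (tgt e) a - Amat src tgt B (tgt e) b)))
      = (if v = a then (1:ℝ) else 0) - (if v = b then 1 else 0) := by
  have hdet := rlap_det_isUnit src tgt B hB hsimple hconn
  have hθ := theta_pad src tgt B a b
  set cbar : Fin n → ℝ := fun j => (if (j.castSucc : Fin (n+1)) = a then (1:ℝ) else 0)
    - (if (j.castSucc : Fin (n+1)) = b then 1 else 0) with hcbar
  set x : Fin n → ℝ := (rlap src tgt B)⁻¹ *ᵥ cbar with hx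
  have goal_eq : ∑ e, incMat src tgt v e *
        (B e * ((Amat src tgt B (src e) a - Amat src tgt B (src e) b)
          - (Amat src tgt B (tgt e) a - Amat src tgt B (tgt e) b)))
      = (lap src tgt B *ᵥ pad x) v := by
    rw [lap_mulVec src tgt B hsimple (pad x) v]
    apply Finset.sum_congr rfl
    intro e _
    have h1 : Amat src tgt B (src e) a - Amat src tgt B (src e) b = pad x (src e) :=
      congrFun hθ (src e)
    have h2 : Amat src tgt B (tgt e) a - Amat src tgt B (tgt e) b = pad x (tgt e) :=
      congrFun hθ (tgt e)
    rw [h1, h2]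
  rw [goal_eq]
  have hcs : ∀ i : Fin n, (lap src tgt B *ᵥ pad x) i.castSucc = cbar i := by
    intro i
    rw [lap_pad, hx, Matrix.mulVec_mulVec, Matrix.mul_nonsing_inv _ hdet, Matrix.one_mulVec]
  have hz : ∑ w, (lap src tgt B *ᵥ pad x) w = 0 := by
    rw [Finset.sum_congr rfl (fun w _ => lap_mulVec src tgt B hsimple (pad x) w),
      Finset.sum_comm]
    apply Finset.sum_eq_zero
    intro e _
    rw [inc_sum src tgt hsimple e (fun _ => B e * (pad x (src e) - pad x (tgt e))), sub_self]
  have hcsum : ∑ w, ((if w = a then (1:ℝ) else 0) - (if w = b then 1 else 0)) = 0 := by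
    rw [Finset.sum_sub_distrib]
    simp [Finset.sum_ite_eq']
  induction v using Fin.lastCases with
  | cast i => rw [hcs i]
  | last =>
    have h1 := Fin.sum_univ_castSucc (f := fun w => (lap src tgt B *ᵥ pad x) w)
    have h2 := Fin.sum_univ_castSucc
      (f := fun w : Fin (n+1) => ((if w = a then (1:ℝ) else 0) - (if w = b then 1 else 0)))
    have h3 : ∑ i : Fin n, (lap src tgt B *ᵥ pad x) i.castSucc
        = ∑ i : Fin n, ((if (i.castSucc : Fin (n+1)) = a then (1:ℝ) else 0)
          - (if (i.castSucc : Fin (n+1)) = b then 1 else 0)) :=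
      Finset.sum_congr rfl (fun i _ => hcs i)
    rw [h1] at hz
    rw [h2] at hcsum
    linarith


/-! ### Directed positive-flow walks -/

def Step (src tgt : Fin m → Fin (n + 1)) (f : Fin m → ℝ)
    (x y : Fin (n + 1)) (e : Fin m) : Prop :=
  (src e = x ∧ tgt e = y ∧ 0 < f e) ∨ (src e = y ∧ tgt e = x ∧ f e < 0)

def IsPath (src tgt : Fin m → Fin (n + 1)) (f : Fin m → ℝ) {k : ℕ}
    (es : Fin k → Fin m) (vs : Fin (k + 1) → Fin (n + 1)) : Prop :=
  ∀ t : Fin k, Step src tgt f (vs t.castSucc) (vs t.succ) (es t)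

lemma isPath_cons {src tgt : Fin m → Fin (n + 1)} {f : Fin m → ℝ} {k : ℕ}
    {es : Fin k → Fin m} {vs : Fin (k + 1) → Fin (n + 1)} {v : Fin (n + 1)} {e : Fin m}
    (hp : IsPath src tgt f es vs) (h : Step src tgt f v (vs 0) e) :
    IsPath src tgt f (Fin.cases e es : Fin (k + 1) → Fin m)
      (Fin.cases v vs : Fin (k + 2) → Fin (n + 1)) := by
  intro t
  induction t using Fin.cases with
  | zero => simp only [Fin.castSucc_zero, Fin.cases_zero, Fin.cases_succ]; exact h
  | succ s =>
    have hs := hp s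
    rw [← Fin.succ_castSucc]
    simpa using hs

lemma step_desc {src tgt : Fin m → Fin (n + 1)} {B : Fin m → ℝ} (hB : ∀ e, 0 < B e)
    {θ : Fin (n + 1) → ℝ} {x y : Fin (n + 1)} {e : Fin m}
    (h : Step src tgt (fun e => B e * (θ (src e) - θ (tgt e))) x y e) : θ y < θ x := by
  rcases h with ⟨hs, ht, hf⟩ | ⟨hs, ht, hf⟩
  · have hf' : 0 < B e * (θ (src e) - θ (tgt e)) := hf
    rw [hs, ht] at hf'; nlinarith [hB e]
  · have hf' : B e * (θ (src e) - θ (tgt e)) < 0 := hf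
    rw [hs, ht] at hf'; nlinarith [hB e]

section Walk

variable {src tgt : Fin m → Fin (n + 1)} {f : Fin m → ℝ} {θ : Fin (n + 1) → ℝ}
  {a b : Fin (n + 1)}

lemma exists_out (hsimple : ∀ e, src e ≠ tgt e) (hab : a ≠ b)
    (hcons : ∀ v, ∑ e, incMat src tgt v e * f e
      = (if v = a then (1:ℝ) else 0) - (if v = b then 1 else 0))
    {v : Fin (n + 1)} (hvb : v ≠ b)
    (htr : v = a ∨ ∃ e, (tgt e = v ∧ 0 < f e) ∨ (src e = v ∧ f e < 0)) :
    ∃ e, (src e = v ∧ 0 < f e) ∨ (tgt e = v ∧ f e < 0) := by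
  by_contra hno
  push_neg at hno
  have hterm : ∀ e, incMat src tgt v e * f e ≤ 0 := by
    intro e
    rcases hno e with ⟨h1, h2⟩
    by_cases hs : src e = v
    · have h1' : f e ≤ 0 := by
        by_contra hh
        exact absurd (h1 hs) (by push_neg; linarith)
      simpa [incMat, hs] using h1'
    · by_cases ht : tgt e = v
      · have h2' : 0 ≤ f e := by
          by_contra hh
          exact absurd (h2 ht) (by push_neg; linarith)
        have hinc : incMat src tgt v e = -1 := by simp [incMat, hs, ht]
        rw [hinc]; linarith
      · have hinc : incMat src tgt v e = 0 := by simp [incMat, hs, ht]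
        rw [hinc, zero_mul]
  have hsum := hcons v
  have hle : ∑ e, incMat src tgt v e * f e ≤ 0 := Finset.sum_nonpos (fun e _ => hterm e)
  by_cases hva : v = a
  · rw [if_pos hva, if_neg hvb] at hsum
    linarith
  · rcases htr with h | ⟨e1, he1⟩
    · exact hva h
    · rw [if_neg hva, if_neg hvb] at hsum
      have hall := (Finset.sum_eq_zero_iff_of_nonpos (fun e _ => hterm e)).1 (by linarith)
        e1 (Finset.mem_univ e1)
      rcases he1 with ⟨ht, hf⟩ | ⟨hs, hf⟩
      · have hs' : src e1 ≠ v := fun hs => hsimple e1 (hs.trans ht.symm)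
        have hinc : incMat src tgt v e1 = -1 := by simp [incMat, hs', ht]
        rw [hinc] at hall; linarith
      · have hinc : incMat src tgt v e1 = 1 := by simp [incMat, hs]
        rw [hinc] at hall; linarith

lemma exists_in (hsimple : ∀ e, src e ≠ tgt e)
    (hcons : ∀ v, ∑ e, incMat src tgt v e * f e
      = (if v = a then (1:ℝ) else 0) - (if v = b then 1 else 0))
    {v : Fin (n + 1)} (hva : v ≠ a)
    (htr : ∃ e, (src e = v ∧ 0 < f e) ∨ (tgt e = v ∧ f e < 0)) :
    ∃ e, (tgt e = v ∧ 0 < f e) ∨ (src e = v ∧ f e < 0) := by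
  by_contra hno
  push_neg at hno
  have hterm : ∀ e, 0 ≤ incMat src tgt v e * f e := by
    intro e
    rcases hno e with ⟨h1, h2⟩
    by_cases hs : src e = v
    · have h2' : 0 ≤ f e := by
        by_contra hh
        exact absurd (h2 hs) (by push_neg; linarith)
      simpa [incMat, hs] using h2'
    · by_cases ht : tgt e = v
      · have h1' : f e ≤ 0 := by
          by_contra hh
          exact absurd (h1 ht) (by push_neg; linarith)
        have hinc : incMat src tgt v e = -1 := by simp [incMat, hs, ht]
        rw [hinc]; linarith
      · have hinc : incMat src tgt v e = 0 := by simp [incMat, hs, ht]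
        rw [hinc, zero_mul]
  obtain ⟨e1, he1⟩ := htr
  have hpos : 0 < incMat src tgt v e1 * f e1 := by
    rcases he1 with ⟨hs, hf⟩ | ⟨ht, hf⟩
    · have hinc : incMat src tgt v e1 = 1 := by simp [incMat, hs]
      rw [hinc]; linarith
    · have hs' : src e1 ≠ v := fun hs => hsimple e1 (hs.trans ht.symm)
      have hinc : incMat src tgt v e1 = -1 := by simp [incMat, hs', ht]
      rw [hinc]; linarith
  have hle := Finset.single_le_sum (f := fun e => incMat src tgt v e * f e)
    (fun e _ => hterm e) (Finset.mem_univ e1)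
  have hsum := hcons v
  rw [if_neg hva] at hsum
  by_cases hvb : v = b
  · rw [if_pos hvb] at hsum; linarith
  · rw [if_neg hvb] at hsum; linarith

lemma walk_down (hsimple : ∀ e, src e ≠ tgt e) (hab : a ≠ b)
    (hcons : ∀ v, ∑ e, incMat src tgt v e * f e
      = (if v = a then (1:ℝ) else 0) - (if v = b then 1 else 0))
    (hdec : ∀ x y e, Step src tgt f x y e → θ y < θ x) :
    ∀ v : Fin (n + 1), (v = a ∨ ∃ e, (tgt e = v ∧ 0 < f e) ∨ (src e = v ∧ f e < 0)) →
    ∃ (k : ℕ) (es : Fin k → Fin m) (vs : Fin (k + 1) → Fin (n + 1)),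
      IsPath src tgt f es vs ∧ vs 0 = v ∧ vs (Fin.last k) = b := by
  have main : ∀ N : ℕ, ∀ v : Fin (n + 1),
      (Finset.univ.filter (fun u => θ u < θ v)).card ≤ N →
      (v = a ∨ ∃ e, (tgt e = v ∧ 0 < f e) ∨ (src e = v ∧ f e < 0)) →
      ∃ (k : ℕ) (es : Fin k → Fin m) (vs : Fin (k + 1) → Fin (n + 1)),
        IsPath src tgt f es vs ∧ vs 0 = v ∧ vs (Fin.last k) = b := by
    intro N
    induction N with
    | zero =>
      intro v hcard htr
      by_cases hvb : v = b
      · exact ⟨0, Fin.elim0, fun _ => v, fun t => t.elim0, rfl, hvb⟩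
      · exfalso
        obtain ⟨e, he⟩ := exists_out hsimple hab hcons hvb htr
        obtain ⟨w, hw⟩ : ∃ w, Step src tgt f v w e := by
          rcases he with ⟨hs, hf⟩ | ⟨ht, hf⟩
          exacts [⟨tgt e, Or.inl ⟨hs, rfl, hf⟩⟩, ⟨src e, Or.inr ⟨rfl, ht, hf⟩⟩]
        have hlt := hdec _ _ _ hw
        have hmem : w ∈ Finset.univ.filter (fun u => θ u < θ v) := by simp [hlt]
        have := Finset.card_pos.mpr ⟨w, hmem⟩
        omega
    | succ N ih =>
      intro v hcard htr
      by_cases hvb : v = b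
      · exact ⟨0, Fin.elim0, fun _ => v, fun t => t.elim0, rfl, hvb⟩
      · obtain ⟨e, he⟩ := exists_out hsimple hab hcons hvb htr
        obtain ⟨w, hw⟩ : ∃ w, Step src tgt f v w e := by
          rcases he with ⟨hs, hf⟩ | ⟨ht, hf⟩
          exacts [⟨tgt e, Or.inl ⟨hs, rfl, hf⟩⟩, ⟨src e, Or.inr ⟨rfl, ht, hf⟩⟩]
        have hlt := hdec _ _ _ hw
        have htr' : w = a ∨ ∃ e, (tgt e = w ∧ 0 < f e) ∨ (src e = w ∧ f e < 0) := by
          right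
          rcases hw with ⟨hs, ht, hf⟩ | ⟨hs, ht, hf⟩
          exacts [⟨e, Or.inl ⟨ht, hf⟩⟩, ⟨e, Or.inr ⟨hs, hf⟩⟩]
        have hss : Finset.univ.filter (fun u => θ u < θ w)
            ⊂ Finset.univ.filter (fun u => θ u < θ v) := by
          refine (Finset.ssubset_iff_of_subset ?_).2 ⟨w, by simp [hlt], by simp⟩
          intro u hu
          simp only [Finset.mem_filter, Finset.mem_univ, true_and] at hu ⊢
          exact hu.trans hlt
        have hcard' : (Finset.univ.filter (fun u => θ u < θ w)).card ≤ N := by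
          have := Finset.card_lt_card hss
          omega
        obtain ⟨k, es, vs, hp, h0, hlast⟩ := ih w hcard' htr'
        refine ⟨k + 1, Fin.cases e es, Fin.cases v vs,
          isPath_cons hp (by rw [h0]; exact hw), by simp, ?_⟩
        rw [← Fin.succ_last]
        exact hlast
  intro v htr
  exact main _ v le_rfl htr

lemma walk_up (hsimple : ∀ e, src e ≠ tgt e)
    (hcons : ∀ v, ∑ e, incMat src tgt v e * f e
      = (if v = a then (1:ℝ) else 0) - (if v = b then 1 else 0))
    (hdec : ∀ x y e, Step src tgt f x y e → θ y < θ x) (l : Fin m) :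
    ∀ v : Fin (n + 1),
    (∃ (k : ℕ) (es : Fin k → Fin m) (vs : Fin (k + 1) → Fin (n + 1)),
        IsPath src tgt f es vs ∧ vs 0 = v ∧ vs (Fin.last k) = b ∧ ∃ t, es t = l) →
    ∃ (k : ℕ) (es : Fin k → Fin m) (vs : Fin (k + 1) → Fin (n + 1)),
        IsPath src tgt f es vs ∧ vs 0 = a ∧ vs (Fin.last k) = b ∧ ∃ t, es t = l := by
  have main : ∀ N : ℕ, ∀ v : Fin (n + 1),
      (Finset.univ.filter (fun u => θ v < θ u)).card ≤ N →
      (∃ (k : ℕ) (es : Fin k → Fin m) (vs : Fin (k + 1) → Fin (n + 1)),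
        IsPath src tgt f es vs ∧ vs 0 = v ∧ vs (Fin.last k) = b ∧ ∃ t, es t = l) →
      ∃ (k : ℕ) (es : Fin k → Fin m) (vs : Fin (k + 1) → Fin (n + 1)),
        IsPath src tgt f es vs ∧ vs 0 = a ∧ vs (Fin.last k) = b ∧ ∃ t, es t = l := by
    intro N
    induction N with
    | zero =>
      intro v hcard ⟨k, es, vs, hp, h0, hlast, t0, ht0⟩
      by_cases hva : v = a
      · exact ⟨k, es, vs, hp, by rw [h0, hva], hlast, t0, ht0⟩
      · exfalso
        have hk : 0 < k := t0.pos
        set z : Fin k := ⟨0, hk⟩ with hz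
        have hstep := hp z
        have hz0 : (z.castSucc : Fin (k + 1)) = 0 := by ext; simp [hz]
        rw [hz0, h0] at hstep
        have htr' : ∃ e, (src e = v ∧ 0 < f e) ∨ (tgt e = v ∧ f e < 0) := by
          rcases hstep with ⟨hs, ht, hf⟩ | ⟨hs, ht, hf⟩
          exacts [⟨es z, Or.inl ⟨hs, hf⟩⟩, ⟨es z, Or.inr ⟨ht, hf⟩⟩]
        obtain ⟨e1, he1⟩ := exists_in hsimple hcons hva htr'
        obtain ⟨u, hu⟩ : ∃ u, Step src tgt f u v e1 := by
          rcases he1 with ⟨ht, hf⟩ | ⟨hs, hf⟩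
          exacts [⟨src e1, Or.inl ⟨rfl, ht, hf⟩⟩, ⟨tgt e1, Or.inr ⟨hs, rfl, hf⟩⟩]
        have hlt := hdec _ _ _ hu
        have hmem : u ∈ Finset.univ.filter (fun x => θ v < θ x) := by simp [hlt]
        have := Finset.card_pos.mpr ⟨u, hmem⟩
        omega
    | succ N ih =>
      intro v hcard ⟨k, es, vs, hp, h0, hlast, t0, ht0⟩
      by_cases hva : v = a
      · exact ⟨k, es, vs, hp, by rw [h0, hva], hlast, t0, ht0⟩
      · have hk : 0 < k := t0.pos
        set z : Fin k := ⟨0, hk⟩ with hz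
        have hstep := hp z
        have hz0 : (z.castSucc : Fin (k + 1)) = 0 := by ext; simp [hz]
        rw [hz0, h0] at hstep
        have htr' : ∃ e, (src e = v ∧ 0 < f e) ∨ (tgt e = v ∧ f e < 0) := by
          rcases hstep with ⟨hs, ht, hf⟩ | ⟨hs, ht, hf⟩
          exacts [⟨es z, Or.inl ⟨hs, hf⟩⟩, ⟨es z, Or.inr ⟨ht, hf⟩⟩]
        obtain ⟨e1, he1⟩ := exists_in hsimple hcons hva htr'
        obtain ⟨u, hu⟩ : ∃ u, Step src tgt f u v e1 := by
          rcases he1 with ⟨ht, hf⟩ | ⟨hs, hf⟩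
          exacts [⟨src e1, Or.inl ⟨rfl, ht, hf⟩⟩, ⟨tgt e1, Or.inr ⟨hs, rfl, hf⟩⟩]
        have hlt := hdec _ _ _ hu
        have hss : Finset.univ.filter (fun x => θ u < θ x)
            ⊂ Finset.univ.filter (fun x => θ v < θ x) := by
          refine (Finset.ssubset_iff_of_subset ?_).2 ⟨u, by simp [hlt], by simp⟩
          intro w hw
          simp only [Finset.mem_filter, Finset.mem_univ, true_and] at hw ⊢
          exact hlt.trans hw
        have hcard' : (Finset.univ.filter (fun x => θ u < θ x)).card ≤ N := by
          have := Finset.card_lt_card hss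
          omega
        refine ih u hcard' ⟨k + 1, Fin.cases e1 es, Fin.cases u vs,
          isPath_cons hp (by rw [h0]; exact hu), by simp, ?_, ⟨t0.succ, by simpa using ht0⟩⟩
        rw [← Fin.succ_last]
        exact hlast
  intro v h
  exact main _ v le_rfl h

lemma path_anti (hdec : ∀ x y e, Step src tgt f x y e → θ y < θ x) {k : ℕ}
    {es : Fin k → Fin m} {vs : Fin (k + 1) → Fin (n + 1)} (hp : IsPath src tgt f es vs) :
    ∀ s t : Fin (k + 1), s < t → θ (vs t) < θ (vs s) := by
  have step1 : ∀ (p : ℕ) (h : p < k) (h1 : p + 1 < k + 1) (h2 : p < k + 1),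
      θ (vs ⟨p + 1, h1⟩) < θ (vs ⟨p, h2⟩) := by
    intro p h h1 h2
    have hd := hdec _ _ _ (hp ⟨p, h⟩)
    have e1 : (⟨p, h⟩ : Fin k).castSucc = ⟨p, h2⟩ := rfl
    have e2 : (⟨p, h⟩ : Fin k).succ = ⟨p + 1, h1⟩ := rfl
    rw [e1, e2] at hd
    exact hd
  have gen : ∀ (d s : ℕ) (hs : s + d + 1 < k + 1) (hs2 : s < k + 1),
      θ (vs ⟨s + d + 1, hs⟩) < θ (vs ⟨s, hs2⟩) := by
    intro d
    induction d with
    | zero => intro s hs hs2; exact step1 s (by omega) hs hs2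
    | succ d ih =>
      intro s hs hs2
      have h1 := ih s (by omega) hs2
      have h2 := step1 (s + d + 1) (by omega) (by omega) (by omega)
      have he : (⟨s + (d + 1) + 1, hs⟩ : Fin (k + 1)) = ⟨s + d + 1 + 1, by omega⟩ := by
        ext; simp; omega
      rw [he]
      exact h2.trans h1
  intro s t hst
  have hlt : s.1 < t.1 := hst
  obtain ⟨d, hd⟩ : ∃ d, t.1 = s.1 + d + 1 := ⟨t.1 - s.1 - 1, by omega⟩
  have ht : t = ⟨s.1 + d + 1, by rw [← hd]; exact t.isLt⟩ := by ext; exact hd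
  rw [ht]
  exact gen d s.1 _ s.isLt

lemma path_inj (hdec : ∀ x y e, Step src tgt f x y e → θ y < θ x) {k : ℕ}
    {es : Fin k → Fin m} {vs : Fin (k + 1) → Fin (n + 1)} (hp : IsPath src tgt f es vs) :
    Function.Injective vs := by
  intro x y h
  rcases lt_trichotomy x y with hlt | heq | hlt
  · have := path_anti hdec hp x y hlt
    rw [h] at this
    exact absurd this (lt_irrefl _)
  · exact heq
  · have := path_anti hdec hp y x hlt
    rw [h] at this
    exact absurd this (lt_irrefl _)

end Walk

/-! ### The cycle construction -/

lemma cycle_of_flow (src tgt : Fin m → Fin (n + 1)) (B : Fin m → ℝ)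
    (hB : ∀ e, 0 < B e) (hsimple : ∀ e, src e ≠ tgt e)
    (hconn : ConnectedOn src tgt Finset.univ) (l lhat : Fin m) (hl : l ≠ lhat)
    (hf : ptdf src tgt B l (src lhat) (tgt lhat) ≠ 0) :
    ExistsSimpleCycleThrough src tgt l lhat := by
  classical
  set θ : Fin (n + 1) → ℝ :=
    fun v => Amat src tgt B v (src lhat) - Amat src tgt B v (tgt lhat) with hθdef
  set f : Fin m → ℝ := fun e => B e * (θ (src e) - θ (tgt e)) with hfdef
  have hcons : ∀ v, ∑ e, incMat src tgt v e * f e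
      = (if v = src lhat then (1:ℝ) else 0) - (if v = tgt lhat then 1 else 0) :=
    fun v => conservation src tgt B hB hsimple hconn (src lhat) (tgt lhat) v
  have hdec : ∀ x y e, Step src tgt f x y e → θ y < θ x :=
    fun x y e h => step_desc hB h
  have hfl : f l ≠ 0 := by
    have hpt : ptdf src tgt B l (src lhat) (tgt lhat) = f l := by
      simp only [hfdef, hθdef, ptdf]; ring
    rw [hpt] at hf; exact hf
  have hab : src lhat ≠ tgt lhat := hsimple lhat
  -- orient l
  obtain ⟨x, y, hxy⟩ : ∃ x y, Step src tgt f x y l := by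
    rcases lt_or_gt_of_ne hfl with h | h
    exacts [⟨tgt l, src l, Or.inr ⟨rfl, rfl, h⟩⟩, ⟨src l, tgt l, Or.inl ⟨rfl, rfl, h⟩⟩]
  -- path from y down to tgt lhat
  have htry : y = src lhat ∨ ∃ e, (tgt e = y ∧ 0 < f e) ∨ (src e = y ∧ f e < 0) := by
    right
    rcases hxy with ⟨hs, ht, hf'⟩ | ⟨hs, ht, hf'⟩
    exacts [⟨l, Or.inl ⟨ht, hf'⟩⟩, ⟨l, Or.inr ⟨hs, hf'⟩⟩]
  obtain ⟨k2, es2, vs2, hp2, h20, h2last⟩ :=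
    walk_down (a := src lhat) (b := tgt lhat) hsimple hab hcons hdec y htry
  have hp2' := isPath_cons hp2 (show Step src tgt f x (vs2 0) l by rw [h20]; exact hxy)
  have hfull := walk_up (a := src lhat) (b := tgt lhat) hsimple hcons hdec l x
    ⟨k2 + 1, Fin.cases l es2, Fin.cases x vs2, hp2', by simp, by
      rw [← Fin.succ_last]; exact h2last, ⟨0, by simp⟩⟩
  obtain ⟨k, es, vs, hp, h0, hlast, t0, ht0⟩ := hfull
  have hk : 0 < k := t0.pos
  obtain ⟨κ, rfl⟩ : ∃ κ, k = κ + 1 := ⟨k - 1, by omega⟩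
  have hvinj : Function.Injective vs := path_inj hdec hp
  -- the path never uses lhat
  have hnol : ∀ p : Fin (κ + 1), es p ≠ lhat := by
    intro p hpl
    have hstep := hp p
    rw [hpl] at hstep
    rcases hstep with ⟨hs, ht, _⟩ | ⟨hs, ht, _⟩
    · have h1 : p.castSucc = 0 := hvinj (by rw [← hs, h0])
      have h2 : p.succ = Fin.last (κ + 1) := hvinj (by rw [← ht, hlast])
      have v1 : p.1 = 0 := by simpa using congrArg Fin.val h1
      have v2 : p.1 + 1 = κ + 1 := by simpa using congrArg Fin.val h2
      have hκ : κ = 0 := by omega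
      subst hκ
      have hpt : t0 = p := by
        have a1 := t0.isLt; have a2 := p.isLt
        ext; omega
      rw [← hpt, ht0] at hpl
      exact hl hpl
    · have h1 : p.succ = 0 := hvinj (by rw [← hs, h0])
      exact Fin.succ_ne_zero p h1
  have hcc : ∀ p q : Fin (κ + 1), es p = es q → p = q := by
    intro p q hpq
    have hp1 := hp p
    have hq1 := hp q
    rw [hpq] at hp1
    rcases hp1 with ⟨hs1, ht1, hf1⟩ | ⟨hs1, ht1, hf1⟩ <;>
      rcases hq1 with ⟨hs2, ht2, hf2⟩ | ⟨hs2, ht2, hf2⟩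
    · exact Fin.castSucc_injective _ (hvinj (hs1.symm.trans hs2))
    · linarith
    · linarith
    · exact Fin.castSucc_injective _ (hvinj (ht1.symm.trans ht2))
  refine ⟨κ, Fin.snoc es lhat, vs, ?_, hvinj, ?_, ⟨t0.castSucc, by simp [ht0]⟩,
    ⟨Fin.last _, by simp⟩⟩
  · -- injectivity of edges
    intro p q hpq
    rcases Fin.eq_castSucc_or_eq_last p with ⟨p', rfl⟩ | rfl <;>
      rcases Fin.eq_castSucc_or_eq_last q with ⟨q', rfl⟩ | rfl
    · rw [Fin.snoc_castSucc, Fin.snoc_castSucc] at hpq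
      exact congrArg Fin.castSucc (hcc p' q' hpq)
    · rw [Fin.snoc_castSucc, Fin.snoc_last] at hpq
      exact absurd hpq (hnol p')
    · rw [Fin.snoc_last, Fin.snoc_castSucc] at hpq
      exact absurd hpq.symm (hnol q')
    · rfl
  · -- cycle conditions
    intro t
    rcases Fin.eq_castSucc_or_eq_last t with ⟨p, rfl⟩ | rfl
    · have hstep := hp p
      have hsucc : p.castSucc + 1 = p.succ := by
        ext
        simp [Fin.val_add_one_of_lt (Fin.castSucc_lt_last p)]
      rw [Fin.snoc_castSucc, hsucc]
      rcases hstep with ⟨hs, ht, _⟩ | ⟨hs, ht, _⟩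
      exacts [Or.inl ⟨hs, ht⟩, Or.inr ⟨hs, ht⟩]
    · rw [Fin.snoc_last, Fin.last_add_one]
      right
      exact ⟨by rw [h0], by rw [hlast]⟩

/-! ### Non-degeneracy of `1 - D̂` -/

lemma one_sub_Dhat_ne (src tgt : Fin m → Fin (n + 1)) (B : Fin m → ℝ)
    (hB : ∀ e, 0 < B e) (hsimple : ∀ e, src e ≠ tgt e)
    (hconn : ConnectedOn src tgt Finset.univ) (lhat : Fin m)
    (hnb : ConnectedOn src tgt (Finset.univ.erase lhat)) :
    1 - ptdf src tgt B lhat (src lhat) (tgt lhat) ≠ 0 := by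
  classical
  intro h1
  set θ : Fin (n + 1) → ℝ :=
    fun v => Amat src tgt B v (src lhat) - Amat src tgt B v (tgt lhat) with hθdef
  have hcons : ∀ v, ∑ e, incMat src tgt v e * (B e * (θ (src e) - θ (tgt e)))
      = (if v = src lhat then (1:ℝ) else 0) - (if v = tgt lhat then 1 else 0) :=
    fun v => conservation src tgt B hB hsimple hconn (src lhat) (tgt lhat) v
  have hDhat : B lhat * (θ (src lhat) - θ (tgt lhat)) = 1 := by
    have hp : ptdf src tgt B lhat (src lhat) (tgt lhat)
        = B lhat * (θ (src lhat) - θ (tgt lhat)) := by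
      simp only [hθdef, ptdf]; ring
    rw [hp] at h1
    linarith
  have hE : ∑ e, B e * (θ (src e) - θ (tgt e)) ^ 2 = θ (src lhat) - θ (tgt lhat) := by
    have h1' : ∀ e, B e * (θ (src e) - θ (tgt e)) ^ 2
        = (∑ v, incMat src tgt v e * θ v) * (B e * (θ (src e) - θ (tgt e))) := by
      intro e
      rw [inc_sum src tgt hsimple e θ]
      ring
    rw [Finset.sum_congr rfl (fun e _ => h1' e)]
    have h2 : ∀ e, (∑ v, incMat src tgt v e * θ v) * (B e * (θ (src e) - θ (tgt e)))
        = ∑ v, θ v * (incMat src tgt v e * (B e * (θ (src e) - θ (tgt e)))) := by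
      intro e
      rw [Finset.sum_mul]
      exact Finset.sum_congr rfl (fun v _ => by ring)
    rw [Finset.sum_congr rfl (fun e _ => h2 e), Finset.sum_comm]
    have h3 : ∀ v, ∑ e, θ v * (incMat src tgt v e * (B e * (θ (src e) - θ (tgt e))))
        = θ v * ((if v = src lhat then (1:ℝ) else 0) - (if v = tgt lhat then 1 else 0)) := by
      intro v
      rw [← Finset.mul_sum, hcons v]
    rw [Finset.sum_congr rfl (fun v _ => h3 v)]
    simp [mul_sub, Finset.sum_sub_distrib, mul_ite, mul_one, mul_zero, Finset.sum_ite_eq']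
  have hsplit := Finset.sum_erase_add Finset.univ
    (fun e => B e * (θ (src e) - θ (tgt e)) ^ 2) (Finset.mem_univ lhat)
  have hterm : B lhat * (θ (src lhat) - θ (tgt lhat)) ^ 2
      = θ (src lhat) - θ (tgt lhat) := by
    have hr : B lhat * (θ (src lhat) - θ (tgt lhat)) ^ 2
        = (B lhat * (θ (src lhat) - θ (tgt lhat))) * (θ (src lhat) - θ (tgt lhat)) := by
      ring
    rw [hr, hDhat, one_mul]
  have hrest : ∑ e ∈ Finset.univ.erase lhat, B e * (θ (src e) - θ (tgt e)) ^ 2 = 0 := by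
    linarith
  have hzero : ∀ e ∈ Finset.univ.erase lhat, θ (src e) = θ (tgt e) := by
    intro e he
    have hnn : ∀ e ∈ Finset.univ.erase lhat, (0:ℝ) ≤ B e * (θ (src e) - θ (tgt e)) ^ 2 :=
      fun e _ => mul_nonneg (hB e).le (sq_nonneg _)
    have h0 := (Finset.sum_eq_zero_iff_of_nonneg hnn).1 hrest e he
    have hd : (θ (src e) - θ (tgt e)) ^ 2 = 0 := by
      rcases mul_eq_zero.1 h0 with h | h
      · exact absurd h (hB e).ne'
      · exact h
    have := (pow_eq_zero_iff (two_ne_zero)).1 hd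
    linarith
  have hconst := const_of_conn src tgt _ hnb θ hzero
  have heq : θ (src lhat) = θ (tgt lhat) := hconst _ _
  rw [heq, sub_self, mul_zero] at hDhat
  exact zero_ne_one hDhat

end FLAux

/-- **Failure localization for a single non-bridge outage, Corollary 2.**
For a non-bridge line `ℓ̂`: if no simple cycle contains a surviving line `l` together with
`ℓ̂` (i.e. they lie in different blocks), then `K_{lℓ̂} = 0` and `D_{lℓ̂} = 0`; moreover
for any surviving line `l`, `D_{lℓ̂} = 0` if and only if `K_{lℓ̂} = 0`. -/
theorem failure_localization_non_bridge
    (src tgt : Fin m → Fin (n + 1)) (B : Fin m → ℝ)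
    (hB : ∀ e, 0 < B e)
    (hsimple : ∀ e, src e ≠ tgt e)
    (hconn : ConnectedOn src tgt Finset.univ)
    (lhat : Fin m)
    (hnb : ConnectedOn src tgt (Finset.univ.erase lhat)) :
    (∀ l : Fin m, l ≠ lhat → ¬ ExistsSimpleCycleThrough src tgt l lhat →
        ptdf src tgt B l (src lhat) (tgt lhat)
            / (1 - ptdf src tgt B lhat (src lhat) (tgt lhat)) = 0
          ∧ ptdf src tgt B l (src lhat) (tgt lhat) = 0)
      ∧ (∀ l : Fin m, l ≠ lhat →
          (ptdf src tgt B l (src lhat) (tgt lhat) = 0 ↔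
            ptdf src tgt B l (src lhat) (tgt lhat)
              / (1 - ptdf src tgt B lhat (src lhat) (tgt lhat)) = 0)) := by
  have h1 : 1 - ptdf src tgt B lhat (src lhat) (tgt lhat) ≠ 0 :=
    FLAux.one_sub_Dhat_ne src tgt B hB hsimple hconn lhat hnb
  constructor
  · intro l hl hcyc
    have hD : ptdf src tgt B l (src lhat) (tgt lhat) = 0 := by
      by_contra hD
      exact hcyc (FLAux.cycle_of_flow src tgt B hB hsimple hconn l lhat hl hD)
    exact ⟨by rw [hD]; exact zero_div _, hD⟩
  · intro l _
    constructor
    · intro h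
      rw [h]
      exact zero_div _
    · intro h
      rcases div_eq_zero_iff.1 h with h' | h'
      · exact h'
      · exact absurd h' h1
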